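/- Let F be a field, A an m×m matrix over F and B a k×k matrix over F. Then the minimal polynomials of A and B are coprime in F[x] if and only if every (m+k)×(m+k) matrix over F that commutes with the block-diagonal matrix diag(A,B) is of the form diag(X,Y) where X is an m×m matrix commuting with A and Y is a k×k matrix commuting with B. -/

import Mathlib

open Matrix Polynomial Finset

section Aux

variable {F : Type*} [Field F]

/-- If `A * P = P * B`, then `p(A) * P = P * p(B)` for every polynomial `p`. -/
lemma aux_intertwine {n₁ n₂ : Type*} [Fintype n₁] [Fintype n₂] [DecidableEq n₁] [DecidableEq n₂]
    (A : Matrix n₁ n₁ F) (B : Matrix n₂ n₂ F) (P : Matrix n₁ n₂ F)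
    (h : A * P = P * B) (r : F[X]) : aeval A r * P = P * aeval B r := by
  have hpow : ∀ j : ℕ, A ^ j * P = P * B ^ j := by
    intro j
    induction j with
    | zero => simp
    | succ j ih =>
      rw [pow_succ, pow_succ, Matrix.mul_assoc, h, ← Matrix.mul_assoc, ih, Matrix.mul_assoc]
  induction r using Polynomial.induction_on' with
  | add p q hp hq => rw [map_add, map_add, Matrix.add_mul, Matrix.mul_add, hp, hq]
  | monomial n a =>
    simp only [aeval_monomial, Algebra.algebraMap_eq_smul_one, Matrix.smul_mul,
      Matrix.mul_smul, Matrix.one_mul, hpow]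

lemma aux_mul_vecMulVec {n₁ n₂ : Type*} [Fintype n₁] [Fintype n₂]
    (N : Matrix n₁ n₁ F) (v : n₁ → F) (w : n₂ → F) :
    N * vecMulVec v w = vecMulVec (N *ᵥ v) w := by
  ext i j
  simp [vecMulVec_apply, mul_apply, mulVec, dotProduct, Finset.sum_mul, mul_assoc]

lemma aux_vecMulVec_mul {n₁ n₂ : Type*} [Fintype n₁] [Fintype n₂]
    (N : Matrix n₂ n₂ F) (v : n₁ → F) (w : n₂ → F) :
    vecMulVec v w * N = vecMulVec v (w ᵥ* N) := by
  ext i j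
  simp [vecMulVec_apply, mul_apply, vecMul, dotProduct, Finset.mul_sum, mul_assoc]

lemma aux_vecMulVec_mulVec {n₁ n₂ : Type*} [Fintype n₁] [Fintype n₂]
    (v : n₁ → F) (w : n₂ → F) (x : n₂ → F) :
    vecMulVec v w *ᵥ x = (w ⬝ᵥ x) • v := by
  ext i
  simp [vecMulVec_apply, mulVec, dotProduct, Finset.mul_sum, mul_assoc, mul_comm, mul_left_comm]

lemma aux_sum_mulVec {n₁ n₂ : Type*} [Fintype n₁] [Fintype n₂] {ι : Type*} (s : Finset ι)
    (f : ι → Matrix n₁ n₂ F) (x : n₂ → F) :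
    (∑ i ∈ s, f i) *ᵥ x = ∑ i ∈ s, (f i *ᵥ x) := by
  induction s using Finset.cons_induction with
  | empty => simp
  | cons a s ha ih => simp [Finset.sum_cons, Matrix.add_mulVec, ih]

/-- If an irreducible `q` divides the minimal polynomial of `A`, then `q(A)` is singular. -/
lemma aux_det_aeval_eq_zero {n : ℕ} (A : Matrix (Fin n) (Fin n) F) {q : F[X]}
    (hq : Irreducible q) (hdvd : q ∣ minpoly F A) : (aeval A q).det = 0 := by
  obtain ⟨r, hr⟩ := hdvd
  by_contra hdet
  have hu : IsUnit (aeval A q) :=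
    (Matrix.isUnit_iff_isUnit_det _).mpr (isUnit_iff_ne_zero.mpr hdet)
  have h0 : aeval A q * aeval A r = aeval A q * 0 := by
    rw [mul_zero, ← _root_.map_mul, ← hr, minpoly.aeval]
  have hr0 : aeval A r = 0 := hu.mul_left_cancel h0
  obtain ⟨s, hs⟩ := minpoly.dvd F A hr0
  have hμ : minpoly F A ≠ 0 := minpoly.ne_zero (IsIntegral.of_finite F A)
  have hrne : r ≠ 0 := by
    rintro rfl
    rw [mul_zero] at hr
    exact hμ hr
  have hcalc : r * 1 = r * (q * s) := by
    rw [mul_one]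
    calc r = minpoly F A * s := hs
    _ = q * r * s := by rw [hr]
    _ = r * (q * s) := by ring
  have h1 : (1 : F[X]) = q * s := mul_left_cancel₀ hrne hcalc
  exact hq.not_isUnit (IsUnit.of_mul_eq_one (a := q) s h1.symm)

/-- Construction of a nonzero intertwiner from common singular polynomial values. -/
lemma aux_exists_intertwiner {m k : ℕ} (A : Matrix (Fin m) (Fin m) F)
    (B : Matrix (Fin k) (Fin k) F) {q : F[X]} (hq : Irreducible q)
    {v : Fin m → F} (hv : v ≠ 0) (hvq : aeval A q *ᵥ v = 0)
    {w : Fin k → F} (hw : w ≠ 0) (hwq : w ᵥ* aeval B q = 0) :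
    ∃ P : Matrix (Fin m) (Fin k) F, P ≠ 0 ∧ A * P = P * B := by
  set d := q.natDegree with hd
  have hdpos : 0 < d := hq.natDegree_pos
  set M : Matrix (Fin m) (Fin k) F := vecMulVec v w with hM
  set P : Matrix (Fin m) (Fin k) F :=
    ∑ i ∈ range (d + 1), ∑ j ∈ range i, q.coeff i • (A ^ j * M * B ^ (i - 1 - j)) with hP
  -- the two annihilation identities
  have hAqM : aeval A q * M = 0 := by
    rw [hM, aux_mul_vecMulVec, hvq]
    ext i j; simp [vecMulVec_apply]
  have hMBq : M * aeval B q = 0 := by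
    rw [hM, aux_vecMulVec_mul, hwq]
    ext i j; simp [vecMulVec_apply]
  -- the commutation relation
  have hcomm : A * P = P * B := by
    have key : A * P - P * B = aeval A q * M - M * aeval B q := by
      have lhs : A * P - P * B = ∑ i ∈ range (d + 1),
          q.coeff i • (∑ j ∈ range i,
            ((A ^ (j + 1) * M * B ^ (i - (j + 1))) - (A ^ j * M * B ^ (i - j)))) := by
        rw [hP, Matrix.mul_sum, Matrix.sum_mul, ← Finset.sum_sub_distrib]
        refine Finset.sum_congr rfl fun i _ => ?_
        rw [Matrix.mul_sum, Matrix.sum_mul, Finset.smul_sum, ← Finset.sum_sub_distrib]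
        refine Finset.sum_congr rfl fun j hj => ?_
        have hj' : j < i := Finset.mem_range.mp hj
        have e1 : i - (j + 1) = i - 1 - j := by omega
        have e2 : i - j = i - 1 - j + 1 := by omega
        rw [smul_sub, Matrix.mul_smul, Matrix.smul_mul, e1, e2, pow_succ', pow_succ]
        simp only [Matrix.mul_assoc]
      have tele : ∀ i : ℕ, (∑ j ∈ range i,
          ((A ^ (j + 1) * M * B ^ (i - (j + 1))) - (A ^ j * M * B ^ (i - j))))
          = A ^ i * M - M * B ^ i := by
        intro i
        rw [Finset.sum_range_sub (fun j => A ^ j * M * B ^ (i - j))]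
        simp
      rw [lhs]
      simp_rw [tele, smul_sub]
      rw [Finset.sum_sub_distrib]
      congr 1
      · rw [aeval_eq_sum_range, Matrix.sum_mul, ← hd]
        exact Finset.sum_congr rfl fun i _ => (Matrix.smul_mul _ _ _).symm
      · rw [aeval_eq_sum_range, Matrix.mul_sum, ← hd]
        exact Finset.sum_congr rfl fun i _ => (Matrix.mul_smul _ _ _).symm
    rw [hAqM, hMBq, sub_zero] at key
    exact sub_eq_zero.mp key
  -- nonvanishing
  obtain ⟨t, hwt⟩ : ∃ t, w t ≠ 0 := Function.ne_iff.mp hw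
  set x : Fin k → F := Pi.single t 1 with hx
  have hwx : w ⬝ᵥ x = w t := by simp [hx, dotProduct_single]
  set c : ℕ → ℕ → F := fun i j => q.coeff i * ((w ᵥ* B ^ (i - 1 - j)) ⬝ᵥ x) with hc
  set p : F[X] := ∑ i ∈ range (d + 1), ∑ j ∈ range i, C (c i j) * X ^ j with hp
  have hPx : P *ᵥ x = aeval A p *ᵥ v := by
    rw [hP, aux_sum_mulVec]
    have haep : aeval A p = ∑ i ∈ range (d + 1), ∑ j ∈ range i, c i j • A ^ j := by
      rw [hp, map_sum]
      refine Finset.sum_congr rfl fun i _ => ?_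
      rw [map_sum]
      refine Finset.sum_congr rfl fun j _ => ?_
      rw [_root_.map_mul, aeval_C, map_pow, aeval_X, Algebra.smul_def]
    rw [haep, aux_sum_mulVec]
    refine Finset.sum_congr rfl fun i _ => ?_
    rw [aux_sum_mulVec, aux_sum_mulVec]
    refine Finset.sum_congr rfl fun j _ => ?_
    rw [smul_mulVec, smul_mulVec, Matrix.mul_assoc, ← Matrix.mulVec_mulVec,
      ← Matrix.mulVec_mulVec, hM, aux_vecMulVec_mulVec, Matrix.mulVec_smul,
      dotProduct_mulVec]
    simp only [hc]
    rw [mul_smul]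
  have hcoeff : p.coeff (d - 1) = q.coeff d * (w ⬝ᵥ x) := by
    rw [hp]
    rw [finset_sum_coeff]
    have inner : ∀ i ∈ range (d + 1),
        (∑ j ∈ range i, C (c i j) * X ^ j).coeff (d - 1)
          = if d - 1 < i then c i (d - 1) else 0 := by
      intro i _
      rw [finset_sum_coeff]
      simp_rw [coeff_C_mul, coeff_X_pow, mul_ite, mul_one, mul_zero]
      rw [Finset.sum_ite_eq (range i) (d - 1) (fun j => c i j)]
      simp [Finset.mem_range]
    rw [Finset.sum_congr rfl inner]
    rw [Finset.sum_ite, Finset.sum_const_zero, add_zero]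
    have hfilter : (range (d + 1)).filter (fun i => d - 1 < i) = {d} := by
      ext i
      simp only [Finset.mem_filter, Finset.mem_range, Finset.mem_singleton]
      omega
    rw [hfilter, Finset.sum_singleton]
    have e0 : d - 1 - (d - 1) = 0 := by omega
    simp [hc, e0]
  have hcne : p.coeff (d - 1) ≠ 0 := by
    rw [hcoeff, hwx]
    exact mul_ne_zero (by rw [hd, ← Polynomial.leadingCoeff]; exact
      Polynomial.leadingCoeff_ne_zero.mpr hq.ne_zero) hwt
  have hpne : p ≠ 0 := fun h => hcne (by rw [h, coeff_zero])
  have hdeg : p.natDegree < d := by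
    have : p.natDegree ≤ d - 1 := by
      rw [hp]
      refine Polynomial.natDegree_sum_le_of_forall_le _ _ fun i hi => ?_
      refine Polynomial.natDegree_sum_le_of_forall_le _ _ fun j hj => ?_
      refine le_trans (Polynomial.natDegree_C_mul_le _ _) ?_
      rw [Polynomial.natDegree_X_pow]
      have := Finset.mem_range.mp hi
      have := Finset.mem_range.mp hj
      omega
    omega
  have hndvd : ¬ q ∣ p := fun hdvd =>
    absurd (Polynomial.natDegree_le_of_dvd hdvd hpne) (by omega)
  obtain ⟨a, b, hab⟩ := hq.coprime_iff_not_dvd.mpr hndvd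
  have hpv : aeval A p *ᵥ v ≠ 0 := by
    intro h0
    apply hv
    have h1 : aeval A (a * q + b * p) *ᵥ v = v := by rw [hab, _root_.map_one, Matrix.one_mulVec]
    rw [map_add, _root_.map_mul, _root_.map_mul, Matrix.add_mulVec, ← Matrix.mulVec_mulVec,
      ← Matrix.mulVec_mulVec, hvq, h0, Matrix.mulVec_zero, Matrix.mulVec_zero,
      add_zero] at h1
    exact h1.symm
  refine ⟨P, fun h => hpv ?_, hcomm⟩
  rw [← hPx, h, Matrix.zero_mulVec]

end Aux

/-- The minimal polynomials of `A` and `B` are coprime iff every matrix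
commuting with `diag(A,B)` is block diagonal `diag(X,Y)` with `X` commuting with `A`
and `Y` commuting with `B`. -/
theorem minpoly_isCoprime_iff_centralizer_blockDiag
    {F : Type*} [Field F] {m k : ℕ}
    (A : Matrix (Fin m) (Fin m) F) (B : Matrix (Fin k) (Fin k) F) :
    IsCoprime (minpoly F A) (minpoly F B) ↔
      ∀ Z : Matrix (Fin m ⊕ Fin k) (Fin m ⊕ Fin k) F,
        Z * Matrix.fromBlocks A 0 0 B = Matrix.fromBlocks A 0 0 B * Z →
          ∃ (X : Matrix (Fin m) (Fin m) F) (Y : Matrix (Fin k) (Fin k) F),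
            X * A = A * X ∧ Y * B = B * Y ∧ Z = Matrix.fromBlocks X 0 0 Y := by
  constructor
  · rintro ⟨u, t, hut⟩ Z hZ
    set X := Z.toBlocks₁₁ with hX
    set P := Z.toBlocks₁₂ with hPd
    set Q := Z.toBlocks₂₁ with hQd
    set Y := Z.toBlocks₂₂ with hY
    have hZeq : Z = Matrix.fromBlocks X P Q Y := (Matrix.fromBlocks_toBlocks Z).symm
    rw [hZeq, Matrix.fromBlocks_multiply, Matrix.fromBlocks_multiply] at hZ
    simp only [Matrix.mul_zero, Matrix.zero_mul, add_zero, zero_add] at hZ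
    have h11 : X * A = A * X := congrArg Matrix.toBlocks₁₁ hZ
    have h12 : P * B = A * P := congrArg Matrix.toBlocks₁₂ hZ
    have h21 : Q * A = B * Q := congrArg Matrix.toBlocks₂₁ hZ
    have h22 : Y * B = B * Y := congrArg Matrix.toBlocks₂₂ hZ
    have hP0 : P = 0 := by
      have hint := aux_intertwine A B P h12.symm (t * minpoly F B)
      have h1 : aeval A (u * minpoly F A + t * minpoly F B) = 1 := by
        rw [hut, _root_.map_one]
      rw [map_add, _root_.map_mul, minpoly.aeval, mul_zero, zero_add] at h1
      calc P = aeval A (t * minpoly F B) * P := by rw [h1, Matrix.one_mul]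
      _ = P * aeval B (t * minpoly F B) := hint
      _ = 0 := by rw [_root_.map_mul, minpoly.aeval, mul_zero, Matrix.mul_zero]
    have hQ0 : Q = 0 := by
      have hint := aux_intertwine B A Q h21.symm (t * minpoly F B)
      have h1 : aeval A (u * minpoly F A + t * minpoly F B) = 1 := by
        rw [hut, _root_.map_one]
      rw [map_add, _root_.map_mul, minpoly.aeval, mul_zero, zero_add] at h1
      calc Q = Q * aeval A (t * minpoly F B) := by rw [h1, Matrix.mul_one]
      _ = aeval B (t * minpoly F B) * Q := hint.symm
      _ = 0 := by rw [_root_.map_mul, minpoly.aeval, mul_zero, Matrix.zero_mul]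
    exact ⟨X, Y, h11, h22, by rw [hZeq, hP0, hQ0]⟩
  · intro h
    by_contra hnc
    classical
    have hμA : minpoly F A ≠ 0 := minpoly.ne_zero (IsIntegral.of_finite F A)
    have hgcdu : ¬ IsUnit (EuclideanDomain.gcd (minpoly F A) (minpoly F B)) := fun hu =>
      hnc (EuclideanDomain.gcd_isUnit_iff.mp hu)
    have hgcd0 : EuclideanDomain.gcd (minpoly F A) (minpoly F B) ≠ 0 := fun h0 =>
      hμA ((EuclideanDomain.gcd_eq_zero_iff.mp h0).1)
    obtain ⟨q, hq, hqgcd⟩ := WfDvdMonoid.exists_irreducible_factor hgcdu hgcd0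
    have hqA : q ∣ minpoly F A := hqgcd.trans (EuclideanDomain.gcd_dvd_left _ _)
    have hqB : q ∣ minpoly F B := hqgcd.trans (EuclideanDomain.gcd_dvd_right _ _)
    obtain ⟨v, hv, hvq⟩ := Matrix.exists_mulVec_eq_zero_iff.mpr (aux_det_aeval_eq_zero A hq hqA)
    obtain ⟨w, hw, hwq⟩ := Matrix.exists_vecMul_eq_zero_iff.mpr (aux_det_aeval_eq_zero B hq hqB)
    obtain ⟨P, hPne, hPcomm⟩ := aux_exists_intertwiner A B hq hv hvq hw hwq
    set Z : Matrix (Fin m ⊕ Fin k) (Fin m ⊕ Fin k) F := Matrix.fromBlocks 0 P 0 0 with hZ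
    have hZcomm : Z * Matrix.fromBlocks A 0 0 B = Matrix.fromBlocks A 0 0 B * Z := by
      rw [hZ, Matrix.fromBlocks_multiply, Matrix.fromBlocks_multiply]
      simp [hPcomm]
    obtain ⟨X, Y, _, _, hZeq⟩ := h Z hZcomm
    apply hPne
    have := congrArg Matrix.toBlocks₁₂ hZeq
    rw [hZ] at this
    simpa using this
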